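/- For any graph G and any vertex v, adim(G) ≤ adim(G−v) + 1, where G−v denotes the graph obtained by deleting v; moreover the bound is attained by complete graphs K_n for n ≥ 3. -/

import Mathlib

open SimpleGraph Finset

variable {V : Type*}

/-- truncated distance `d_k(x,y) = min(d(x,y), k+1)` with `d = ∞` across components. -/
noncomputable def truncDist (G : SimpleGraph V) (k : ℕ) (x y : V) : ℕ∞ :=
  min (G.edist x y) (k + 1)

/-- `f` is a resolving broadcast of `G`. -/
def IsResolvingBroadcast (G : SimpleGraph V) (f : V → ℕ) : Prop :=
  ∀ x y : V, x ≠ y → ∃ z : V, 0 < f z ∧ truncDist G (f z) x z ≠ truncDist G (f z) y z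

/-- broadcast dimension -/
noncomputable def bdim (G : SimpleGraph V) [Fintype V] : ℕ :=
  sInf {c : ℕ | ∃ f : V → ℕ, IsResolvingBroadcast G f ∧ ∑ v, f v = c}

/-- adjacency resolving set -/
def IsAdjResolvingSet (G : SimpleGraph V) (S : Set V) : Prop :=
  ∀ x y : V, x ≠ y → ∃ z ∈ S, truncDist G 1 x z ≠ truncDist G 1 y z

/-- adjacency dimension -/
noncomputable def adim (G : SimpleGraph V) [Fintype V] : ℕ :=
  sInf {n : ℕ | ∃ S : Finset V, IsAdjResolvingSet G ↑S ∧ S.card = n}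

/-- resolving set (metric dimension) -/
def IsResolvingSet (G : SimpleGraph V) (S : Set V) : Prop :=
  ∀ x y : V, x ≠ y → ∃ z ∈ S, G.edist x z ≠ G.edist y z

/-- metric dimension -/
noncomputable def mdim (G : SimpleGraph V) [Fintype V] : ℕ :=
  sInf {n : ℕ | ∃ S : Finset V, IsResolvingSet G ↑S ∧ S.card = n}

open scoped Classical in
lemma truncDist_one_eq (G : SimpleGraph V) (x z : V) :
    truncDist G 1 x z = if x = z then 0 else if G.Adj x z then 1 else 2 := by
  unfold truncDist
  have hc : ((1:ℕ) : ℕ∞) + 1 = 2 := by norm_num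
  rw [hc]
  split_ifs with h1 h2
  · subst h1; simp [SimpleGraph.edist_self]
  · rw [SimpleGraph.edist_eq_one_iff_adj.mpr h2]
    norm_num
  · have h0 : G.edist x z ≠ 0 := fun h => h1 (SimpleGraph.edist_eq_zero_iff.mp h)
    have hne1 : G.edist x z ≠ 1 := fun h => h2 (SimpleGraph.edist_eq_one_iff_adj.mp h)
    have h1lt : 1 < G.edist x z :=
      lt_of_le_of_ne (ENat.one_le_iff_ne_zero.mpr h0) (Ne.symm hne1)
    have h2le : (2 : ℕ∞) ≤ G.edist x z := by
      have := Order.add_one_le_of_lt h1lt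
      simpa [one_add_one_eq_two] using this
    exact min_eq_right h2le

lemma truncDist_one_induce (G : SimpleGraph V) (s : Set V) (x z : s) :
    truncDist (G.induce s) 1 x z = truncDist G 1 (x : V) (z : V) := by
  rw [truncDist_one_eq, truncDist_one_eq]
  rcases eq_or_ne x z with rfl | h
  · simp
  · rw [if_neg h, if_neg (fun hh => h (Subtype.ext hh))]
    by_cases ha : G.Adj (x : V) (z : V)
    · rw [if_pos ha]; exact if_pos ha
    · rw [if_neg ha]; exact if_neg ha

lemma truncDist_one_ne_zero (G : SimpleGraph V) {x z : V} (h : x ≠ z) :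
    truncDist G 1 x z ≠ 0 := by
  rw [truncDist_one_eq]
  split_ifs with h1 h2 <;> simp_all

lemma adim_set_nonempty (W : Type*) [Fintype W] (G : SimpleGraph W) :
    {n : ℕ | ∃ S : Finset W, IsAdjResolvingSet G ↑S ∧ S.card = n}.Nonempty := by
  refine ⟨(Finset.univ : Finset W).card, Finset.univ, ?_, rfl⟩
  intro x y hxy
  refine ⟨x, by simp, ?_⟩
  rw [truncDist_one_eq G x x, if_pos rfl]
  exact (truncDist_one_ne_zero G hxy.symm).symm

lemma adim_top (W : Type*) [Fintype W] [DecidableEq W] [Nonempty W] :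
    adim (⊤ : SimpleGraph W) = Fintype.card W - 1 := by
  apply le_antisymm
  · obtain ⟨w⟩ := ‹Nonempty W›
    apply Nat.sInf_le
    refine ⟨Finset.univ.erase w, ?_, by simp⟩
    intro x y hxy
    rcases eq_or_ne x w with rfl | hx
    · refine ⟨y, by simp [hxy.symm], ?_⟩
      rw [truncDist_one_eq _ y y, if_pos rfl]
      exact truncDist_one_ne_zero _ hxy
    · refine ⟨x, by simp [hx], ?_⟩
      rw [truncDist_one_eq _ x x, if_pos rfl]
      exact (truncDist_one_ne_zero _ hxy.symm).symm
  · obtain ⟨S, hS, hcard⟩ := Nat.sInf_mem (adim_set_nonempty W (⊤ : SimpleGraph W))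
    have hadim : adim (⊤ : SimpleGraph W) = S.card := hcard.symm
    have hcompl : Sᶜ.card ≤ 1 := by
      rw [Finset.card_le_one]
      intro a ha b hb
      by_contra hab
      obtain ⟨z, hz, hne⟩ := hS a b hab
      have hza : z ≠ a := fun h => (Finset.mem_compl.mp ha) (h ▸ hz)
      have hzb : z ≠ b := fun h => (Finset.mem_compl.mp hb) (h ▸ hz)
      apply hne
      rw [truncDist_one_eq _ a z, truncDist_one_eq _ b z,
        if_neg (Ne.symm hza), if_neg (Ne.symm hzb),
        if_pos (by exact Ne.symm hza : (⊤ : SimpleGraph W).Adj a z),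
        if_pos (by exact Ne.symm hzb : (⊤ : SimpleGraph W).Adj b z)]
    have h1 : Fintype.card W - S.card ≤ 1 := by
      rw [← Finset.card_compl]; exact hcompl
    have h2 : S.card ≤ Fintype.card W := Finset.card_le_univ S
    omega

lemma induce_top (s : Set V) : (⊤ : SimpleGraph V).induce s = ⊤ := by
  ext x y
  simp [Subtype.ext_iff]

theorem stmt_15 :
    (∀ (V : Type) (_ : Fintype V) (_ : DecidableEq V) (G : SimpleGraph V)
      (v : V), adim G ≤ adim (G.induce ({v}ᶜ : Set V)) + 1) ∧
    ∀ (n : ℕ), 3 ≤ n → ∀ v : Fin n,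
      adim (⊤ : SimpleGraph (Fin n)) =
        adim ((⊤ : SimpleGraph (Fin n)).induce ({v}ᶜ : Set (Fin n))) + 1 := by
  constructor
  · intro V _ _ G v
    obtain ⟨S, hS, hcard⟩ := Nat.sInf_mem (adim_set_nonempty _ (G.induce ({v}ᶜ : Set V)))
    have hadim : adim (G.induce ({v}ᶜ : Set V)) = S.card := hcard.symm
    set T : Finset V := insert v (S.map (Function.Embedding.subtype _)) with hT
    have hres : IsAdjResolvingSet G ↑T := by
      intro x y hxy
      rcases eq_or_ne x v with rfl | hx
      · refine ⟨x, by simp [hT], ?_⟩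
        rw [truncDist_one_eq G x x, if_pos rfl]
        exact (truncDist_one_ne_zero _ hxy.symm).symm
      rcases eq_or_ne y v with rfl | hy
      · refine ⟨y, by simp [hT], ?_⟩
        rw [truncDist_one_eq G y y, if_pos rfl]
        exact truncDist_one_ne_zero _ hxy
      · have hx' : x ∈ ({v}ᶜ : Set V) := by simpa using hx
        have hy' : y ∈ ({v}ᶜ : Set V) := by simpa using hy
        obtain ⟨z, hz, hne⟩ := hS ⟨x, hx'⟩ ⟨y, hy'⟩ (by simpa [Subtype.ext_iff] using hxy)
        refine ⟨(z : V), ?_, ?_⟩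
        · simp only [hT, Finset.coe_insert, Set.mem_insert_iff, Finset.coe_map,
            Set.mem_image, Finset.mem_coe]
          exact Or.inr ⟨z, hz, rfl⟩
        · rwa [truncDist_one_induce, truncDist_one_induce] at hne
    have h1 : adim G ≤ T.card := Nat.sInf_le ⟨T, hres, rfl⟩
    have h2 : T.card ≤ S.card + 1 := by
      rw [hT]
      exact (Finset.card_insert_le _ _).trans (by rw [Finset.card_map])
    omega
  · intro n hn v
    haveI : Nonempty (Fin n) := ⟨⟨0, by omega⟩⟩
    haveI hne : Nonempty ↥({v}ᶜ : Set (Fin n)) := by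
      obtain ⟨w, hw⟩ := Fintype.exists_ne_of_one_lt_card (by simp; omega) v
      exact ⟨⟨w, by simpa using hw⟩⟩
    rw [_root_.induce_top, adim_top, adim_top]
    have hcard : Fintype.card ↥({v}ᶜ : Set (Fin n)) = n - 1 := by
      rw [Fintype.card_compl_set]
      simp
    rw [hcard]
    simp only [Fintype.card_fin]
    omega
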